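/- arXiv:2308.07602 — 5 statements merged into one kernel-verified Lean document; each statement's English description precedes it below -/
import Mathlib

section
/- Let T : V → V be a linear operator on a finite-dimensional complex vector space such that the trajectory t ↦ exp(tT)v is bounded on [0,∞) for every v in some spanning set of V. Then every eigenvalue of T has nonpositive real part, and for every eigenvalue λ with Re λ = 0, the generalized eigenspace of λ equals the eigenspace of λ. -/
open Filter Module

-- key exponential formula
lemma exp_chain {V : Type*} [NormedAddCommGroup V] [NormedSpace ℂ V] [FiniteDimensional ℂ V]
    (T : V →L[ℂ] V) (μ : ℂ) (u w : V)
    (hu : (T - μ • (1 : V →L[ℂ] V)) u = w) (hw : (T - μ • (1 : V →L[ℂ] V)) w = 0) (t : ℝ) :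
    NormedSpace.exp (t • T) u = Complex.exp (t * μ) • (u + t • w) := by
  set N : V →L[ℂ] V := T - μ • 1 with hN
  have hts : t • T = ((t : ℂ) * μ) • (1 : V →L[ℂ] V) + (t : ℂ) • N := by
    rw [← Complex.coe_smul]
    rw [hN, smul_sub, smul_smul]
    abel
  have hcomm : Commute (((t : ℂ) * μ) • (1 : V →L[ℂ] V)) ((t : ℂ) • N) :=
    ((Commute.one_left N).smul_left _).smul_right _
  rw [hts, NormedSpace.exp_add_of_commute_of_mem_ball (𝕂 := ℂ) hcomm
    ((NormedSpace.expSeries_radius_eq_top ℂ (V →L[ℂ] V)).symm ▸ edist_lt_top _ _)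
    ((NormedSpace.expSeries_radius_eq_top ℂ (V →L[ℂ] V)).symm ▸ edist_lt_top _ _)]
  have h1 : NormedSpace.exp (((t : ℂ) * μ) • (1 : V →L[ℂ] V))
      = Complex.exp ((t : ℂ) * μ) • (1 : V →L[ℂ] V) := by
    rw [← Algebra.algebraMap_eq_smul_one, ← Algebra.algebraMap_eq_smul_one,
      (NormedSpace.algebraMap_exp_comm ((t:ℂ)*μ)).symm, Complex.exp_eq_exp_ℂ]
  have h2 : NormedSpace.exp ((t : ℂ) • N) u = u + (t : ℂ) • w := by
    have happ : NormedSpace.exp ((t : ℂ) • N) u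
        = ∑' n : ℕ, ((n.factorial : ℂ)⁻¹ • ((t : ℂ) • N) ^ n) u := by
      rw [NormedSpace.exp_eq_tsum (𝕂 := ℂ)]
      exact ((ContinuousLinearMap.apply ℂ V u).map_tsum
        (NormedSpace.expSeries_summable' (𝕂 := ℂ) ((t : ℂ) • N)))
    rw [happ]
    have hterm : ∀ n : ℕ, n ∉ ({0, 1} : Finset ℕ) →
        ((n.factorial : ℂ)⁻¹ • ((t : ℂ) • N) ^ n) u = 0 := by
      intro n hn
      simp only [Finset.mem_insert, Finset.mem_singleton] at hn
      push_neg at hn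
      obtain ⟨m, rfl⟩ : ∃ m, n = m + 2 := by
        refine ⟨n - 2, ?_⟩
        omega
      have hz : (((t : ℂ) • N) ^ (m + 2)) u = 0 := by
        rw [smul_pow, ContinuousLinearMap.smul_apply]
        have h2' : (N ^ (m + 2)) u = 0 := by
          rw [pow_add, ContinuousLinearMap.mul_apply]
          have hsq : (N ^ 2) u = 0 := by
            rw [pow_two, ContinuousLinearMap.mul_apply, hu, hw]
          rw [hsq, map_zero]
        rw [h2', smul_zero]
      rw [ContinuousLinearMap.smul_apply, hz, smul_zero]
    rw [tsum_eq_sum hterm]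
    simp [Finset.sum_insert, smul_pow, hu]
  rw [ContinuousLinearMap.mul_apply, h2, h1]
  simp only [ContinuousLinearMap.smul_apply, ContinuousLinearMap.one_apply]
  rw [Complex.coe_smul]

/-- If every trajectory `t ↦ exp(tT) v`, for `v` in some spanning set, is bounded on
`[0, ∞)`, then all eigenvalues of `T` have nonpositive real part and the generalized
eigenspace of every eigenvalue on the imaginary axis equals its eigenspace. -/
theorem spectrum_of_bounded_trajectories
    {V : Type*} [NormedAddCommGroup V] [NormedSpace ℂ V] [FiniteDimensional ℂ V]
    (T : V →L[ℂ] V) (s : Set V) (hspan : Submodule.span ℂ s = ⊤)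
    (hbdd : ∀ v ∈ s, ∃ C : ℝ, ∀ t : ℝ, 0 ≤ t → ‖NormedSpace.exp (t • T) v‖ ≤ C) :
    (∀ μ : ℂ, Module.End.HasEigenvalue (T : V →ₗ[ℂ] V) μ → μ.re ≤ 0) ∧
      (∀ μ : ℂ, μ.re = 0 →
        Module.End.maxGenEigenspace (T : V →ₗ[ℂ] V) μ
          = Module.End.eigenspace (T : V →ₗ[ℂ] V) μ) := by
  -- boundedness for every vector
  have hball : ∀ v : V, ∃ C : ℝ, ∀ t : ℝ, 0 ≤ t → ‖NormedSpace.exp (t • T) v‖ ≤ C := by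
    intro v
    have hv : v ∈ Submodule.span ℂ s := by rw [hspan]; trivial
    induction hv using Submodule.span_induction with
    | mem x hx => exact hbdd x hx
    | zero => exact ⟨0, fun t _ => by simp⟩
    | add x y _ _ ihx ihy =>
        obtain ⟨C, hC⟩ := ihx; obtain ⟨D, hD⟩ := ihy
        exact ⟨C + D, fun t ht => by
          rw [map_add]
          exact (norm_add_le _ _).trans (add_le_add (hC t ht) (hD t ht))⟩
    | smul a x _ ih =>
        obtain ⟨C, hC⟩ := ih
        exact ⟨‖a‖ * C, fun t ht => by
          rw [map_smul, norm_smul]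
          exact mul_le_mul_of_nonneg_left (hC t ht) (norm_nonneg a)⟩
  -- the norm of trajectories of (generalized) eigenvectors
  have grow : ∀ (μ : ℂ) (u w : V), (T - μ • (1 : V →L[ℂ] V)) u = w →
      (T - μ • (1 : V →L[ℂ] V)) w = 0 → ∀ t : ℝ,
      ‖NormedSpace.exp (t • T) u‖ = Real.exp (t * μ.re) * ‖u + t • w‖ := by
    intro μ u w hu hw t
    rw [exp_chain T μ u w hu hw t, norm_smul, Complex.norm_exp]
    congr 2
    simp [Complex.mul_re]
  constructor
  · -- part 1
    intro μ hμ
    by_contra h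
    push_neg at h
    obtain ⟨v, hv⟩ := hμ.exists_hasEigenvector
    have hv0 : v ≠ 0 := hv.right
    have hNv : (T - μ • (1 : V →L[ℂ] V)) v = 0 := by
      have := hv.apply_eq_smul
      simp only [ContinuousLinearMap.coe_coe] at this
      simp [ContinuousLinearMap.sub_apply, this]
    obtain ⟨C, hC⟩ := hball v
    have hgrow := grow μ v 0 hNv (by simp)
    have htend : Tendsto (fun t : ℝ => Real.exp (t * μ.re) * ‖v‖) atTop atTop :=
      (Real.tendsto_exp_atTop.comp (tendsto_id.atTop_mul_const h)).atTop_mul_const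
        (norm_pos_iff.mpr hv0)
    obtain ⟨t, htC, ht0⟩ := ((htend.eventually_gt_atTop C).and (eventually_ge_atTop 0)).exists
    have := hC t ht0
    rw [hgrow t] at this
    simp only [smul_zero, add_zero] at this
    linarith
  · -- part 2
    intro μ hre
    set N : V →L[ℂ] V := T - μ • 1 with hN
    -- quadratic collapse
    have quad : ∀ u : V, N (N u) = 0 → N u = 0 := by
      intro u hq
      by_contra hw
      obtain ⟨C, hC⟩ := hball u
      have hgrow := grow μ u (N u) rfl hq
      have hbound : ∀ t : ℝ, 0 ≤ t → ‖u + t • N u‖ ≤ C := by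
        intro t ht
        have := hC t ht
        rw [hgrow t, hre, mul_zero, Real.exp_zero, one_mul] at this
        exact this
      have htend : Tendsto (fun t : ℝ => t * ‖N u‖ - ‖u‖) atTop atTop :=
        (tendsto_id.atTop_mul_const (norm_pos_iff.mpr hw)).atTop_add tendsto_const_nhds
      obtain ⟨t, htC, ht0⟩ :=
        ((htend.eventually_gt_atTop C).and (eventually_ge_atTop 0)).exists
      have h1 := hbound t ht0
      have h2 : ‖t • N u‖ ≤ ‖u + t • N u‖ + ‖u‖ := by
        have := norm_add_le (u + t • N u) (-u)
        simpa using this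
      rw [norm_smul, Real.norm_eq_abs, abs_of_nonneg ht0] at h2
      linarith
    -- powers collapse
    have pows : ∀ (k : ℕ) (u : V), (N ^ k) u = 0 → N u = 0 := by
      intro k
      induction k with
      | zero => intro u hu; simp only [pow_zero, ContinuousLinearMap.one_apply] at hu
                rw [hu]; exact map_zero N
      | succ k ih =>
          intro u hu
          have : (N ^ k) (N u) = 0 := by
            rw [← ContinuousLinearMap.mul_apply, ← pow_succ]
            exact hu
          exact quad u (ih (N u) this)
    -- bridge between End and CLM
    have hNcoe : ((T : V →ₗ[ℂ] V) - μ • 1) = (N : V →ₗ[ℂ] V) := by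
      ext x; simp [hN]
    have hpow : ∀ (n : ℕ) (x : V), ((N : V →ₗ[ℂ] V) ^ n) x = (N ^ n) x := by
      intro n
      induction n with
      | zero => intro x; simp
      | succ n ih =>
          intro x
          rw [pow_succ, pow_succ, Module.End.mul_apply, ContinuousLinearMap.mul_apply,
            ContinuousLinearMap.coe_coe, ih]
    apply le_antisymm
    · intro u humem
      rw [Module.End.maxGenEigenspace_eq_genEigenspace_finrank,
        Module.End.genEigenspace_nat, LinearMap.mem_ker] at humem
      rw [hNcoe] at humem
      rw [hpow] at humem
      have hN0 := pows _ u humem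
      rw [Module.End.mem_eigenspace_iff]
      have : T u - μ • u = 0 := by simpa [hN, ContinuousLinearMap.sub_apply] using hN0
      simp only [ContinuousLinearMap.coe_coe]
      linear_combination (norm := module) this
    · exact Module.End.genEigenspace_le_maximal _ _ 1
end

section
/- Let T : V → V be a linear operator on a finite-dimensional complex inner product space whose eigenvalues all have nonpositive real part and which is semisimple on the imaginary-axis spectrum (ker(T−λ)² = ker(T−λ) for Re λ = 0). Let v₀ ∈ V and suppose exp(tT)v₀ converges to some limit w as t → +∞. Then T(w) = 0, and ⟨u, v₀⟩ = ⟨u, w⟩ for every eigenvector u of the adjoint T* corresponding to an eigenvalue with zero real part. -/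
open Filter Module

lemma exp_apply_eig' {V : Type*} [NormedAddCommGroup V] [InnerProductSpace ℂ V]
    [FiniteDimensional ℂ V] (A : V →L[ℂ] V) (μ : ℂ) (u : V) (h : A u = μ • u) :
    NormedSpace.exp A u = Complex.exp μ • u := by
  have hpow : ∀ n : ℕ, (A ^ n) u = μ ^ n • u := by
    intro n; induction n with
    | zero => simp
    | succ n ih =>
        rw [pow_succ, ContinuousLinearMap.mul_apply, h, map_smul, ih, smul_smul, pow_succ,
          mul_comm]
  have hs : Summable fun n : ℕ => ((Nat.factorial n : ℂ))⁻¹ • A ^ n :=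
    NormedSpace.expSeries_summable' A
  have happ : NormedSpace.exp A u = ∑' n : ℕ, ((Nat.factorial n : ℂ))⁻¹ • (A ^ n) u := by
    rw [NormedSpace.exp_eq_tsum (𝕂 := ℂ)]
    exact ((ContinuousLinearMap.apply ℂ V u).map_tsum hs).trans (by simp)
  rw [happ]
  have heq : ∀ n : ℕ, ((Nat.factorial n : ℂ))⁻¹ • (A ^ n) u
      = (((Nat.factorial n : ℂ))⁻¹ • μ ^ n) • u := by
    intro n; rw [hpow n, smul_smul]; norm_num
  rw [tsum_congr heq, Summable.tsum_smul_const (NormedSpace.expSeries_summable' (𝕂 := ℂ) μ)]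
  congr 1
  rw [Complex.exp_eq_exp_ℂ, NormedSpace.exp_eq_tsum (𝕂 := ℂ)]

lemma adj_exp' {V : Type*} [NormedAddCommGroup V] [InnerProductSpace ℂ V]
    [FiniteDimensional ℂ V] (T : V →L[ℂ] V) (t : ℝ) :
    ContinuousLinearMap.adjoint (NormedSpace.exp (t • T))
      = NormedSpace.exp (t • ContinuousLinearMap.adjoint T) := by
  rw [← ContinuousLinearMap.star_eq_adjoint, NormedSpace.star_exp, star_smul, star_trivial,
    ContinuousLinearMap.star_eq_adjoint]

lemma tendsto_exp_smul_imaginary (ν : ℂ) (hre : ν.re = 0) (c L : ℂ)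
    (h : Tendsto (fun t : ℝ => Complex.exp (t • ν) * c) atTop (nhds L)) : c = L := by
  by_cases hν : ν = 0
  · subst hν; simpa using h
  · have hb : ν.im ≠ 0 := fun hb => hν (Complex.ext hre hb)
    have hnorm : ‖c‖ = ‖L‖ := by
      have h2 : ∀ t : ℝ, ‖Complex.exp (t • ν) * c‖ = ‖c‖ := by
        intro t
        rw [norm_mul, Complex.norm_exp]
        simp [Complex.real_smul, hre]
      exact (tendsto_nhds_unique (h.norm.congr h2) tendsto_const_nhds).symm
    have hfix : ∀ s : ℝ, Complex.exp (s • ν) * L = L := by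
      intro s
      have h1 : Tendsto (fun t : ℝ => Complex.exp ((t + s) • ν) * c) atTop (nhds L) :=
        h.comp (tendsto_atTop_add_const_right atTop s tendsto_id)
      have h2 : ∀ t : ℝ, Complex.exp ((t + s) • ν) * c
          = Complex.exp (s • ν) * (Complex.exp (t • ν) * c) := by
        intro t
        rw [← mul_assoc, ← Complex.exp_add]
        congr 2
        push_cast [Complex.real_smul]
        ring
      exact tendsto_nhds_unique (h.const_mul _) (h1.congr h2)
    have hL0 : L = 0 := by
      have hs := hfix (Real.pi / ν.im)
      have harg : (Real.pi / ν.im : ℝ) • ν = Real.pi * Complex.I := by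
        have hνeq : ν = (ν.im : ℂ) * Complex.I := by
          apply Complex.ext <;> simp [hre]
        have hbC : (ν.im : ℂ) ≠ 0 := by exact_mod_cast hb
        rw [Complex.real_smul, hνeq]
        push_cast
        simp only [Complex.mul_im, Complex.ofReal_re, Complex.ofReal_im, Complex.I_re,
          Complex.I_im, mul_zero, mul_one, zero_add]
        field_simp
        simp [hbC]
      rw [harg, Complex.exp_pi_mul_I] at hs
      linear_combination (-1/2 : ℂ) * hs
    have hc0 : c = 0 := by rw [hL0, norm_zero, norm_eq_zero] at hnorm; exact hnorm
    rw [hc0, hL0]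

/-- If `exp(tT) v₀ → w`, where all eigenvalues of `T` have nonpositive real part and `T`
is semisimple on the imaginary-axis spectrum, then `w` is a fixed point of `T` and
`⟪u, v₀⟫ = ⟪u, w⟫` for every eigenvector `u` of `T*` whose eigenvalue has zero real part. -/
theorem limit_fixed_and_pairing
    {V : Type*} [NormedAddCommGroup V] [InnerProductSpace ℂ V] [FiniteDimensional ℂ V]
    (T : V →L[ℂ] V)
    (hspec : ∀ μ : ℂ, Module.End.HasEigenvalue (T : V →ₗ[ℂ] V) μ → μ.re ≤ 0)
    (hsemi : ∀ μ : ℂ, μ.re = 0 →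
      LinearMap.ker (((T : V →ₗ[ℂ] V) - μ • 1) ^ 2) = LinearMap.ker ((T : V →ₗ[ℂ] V) - μ • 1))
    (v₀ w : V)
    (hconv : Tendsto (fun t : ℝ => NormedSpace.exp (t • T) v₀) atTop (nhds w)) :
    T w = 0 ∧
      ∀ (μ : ℂ) (u : V), Module.End.HasEigenvector
          ((ContinuousLinearMap.adjoint T : V →L[ℂ] V) : V →ₗ[ℂ] V) μ u →
        μ.re = 0 → (inner ℂ u v₀ : ℂ) = inner ℂ u w := by
  have hshift : ∀ s : ℝ, NormedSpace.exp (s • T) w = w := by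
    intro s
    have h1 : Tendsto (fun t : ℝ => NormedSpace.exp ((t + s) • T) v₀) atTop (nhds w) :=
      hconv.comp (tendsto_atTop_add_const_right atTop s tendsto_id)
    have h2 : ∀ t : ℝ, NormedSpace.exp ((t + s) • T) v₀
        = NormedSpace.exp (s • T) (NormedSpace.exp (t • T) v₀) := by
      intro t
      have hcm : Commute (s • T) (t • T) := ((Commute.refl T).smul_left s).smul_right t
      rw [← ContinuousLinearMap.mul_apply, ← NormedSpace.exp_add_of_commute_of_mem_ball (𝕂 := ℂ) hcm
        ((NormedSpace.expSeries_radius_eq_top ℂ (V →L[ℂ] V)).symm ▸ edist_lt_top _ _)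
        ((NormedSpace.expSeries_radius_eq_top ℂ (V →L[ℂ] V)).symm ▸ edist_lt_top _ _)]
      congr 1
      rw [add_comm t s, add_smul]
    have h3 : Tendsto (fun t : ℝ => NormedSpace.exp (s • T) (NormedSpace.exp (t • T) v₀))
        atTop (nhds (NormedSpace.exp (s • T) w)) :=
      ((NormedSpace.exp (s • T)).continuous.tendsto w).comp hconv
    exact tendsto_nhds_unique h3 (h1.congr h2)
  constructor
  · have hre : (NormedSpace.exp : (V →L[ℂ] V) → (V →L[ℂ] V)) = NormedSpace.exp :=
      rfl
    have hd : HasDerivAt (fun s : ℝ => NormedSpace.exp (s • T))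
        (NormedSpace.exp ((0:ℝ) • T) * T) 0 := hasDerivAt_exp_smul_const (𝕂 := ℝ) T 0
    set L : (V →L[ℂ] V) →L[ℝ] V := (ContinuousLinearMap.apply ℂ V w).restrictScalars ℝ with hL
    have hd2 : HasDerivAt (fun s : ℝ => L (NormedSpace.exp (s • T)))
        (L (NormedSpace.exp ((0:ℝ) • T) * T)) 0 :=
      L.hasFDerivAt.comp_hasDerivAt 0 hd
    have hfun : (fun s : ℝ => L (NormedSpace.exp (s • T))) = fun _ => w := by
      funext s
      have h' : L (NormedSpace.exp (s • T)) = NormedSpace.exp (s • T) w := by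
        rw [hre]; rfl
      rw [h', hshift s]
    rw [hfun] at hd2
    have huniq := (hasDerivAt_const (0:ℝ) w).unique hd2
    have h0 : L (NormedSpace.exp ((0:ℝ) • T) * T) = T w := by
      rw [hre, zero_smul, NormedSpace.exp_zero, one_mul]; rfl
    rw [h0] at huniq
    exact huniq.symm
  · intro μ u hu hμ
    have hTu : ContinuousLinearMap.adjoint T u = μ • u := hu.apply_eq_smul
    have hconj : (starRingEnd ℂ) μ = -μ := by
      apply Complex.ext <;> simp [hμ]
    have key : ∀ t : ℝ, (inner ℂ u (NormedSpace.exp (t • T) v₀) : ℂ)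
        = Complex.exp (t • (-μ)) * (inner ℂ u v₀ : ℂ) := by
      intro t
      have hadj := adj_exp' T t
      have heig : (t • ContinuousLinearMap.adjoint T) u = ((t : ℂ) * μ) • u := by
        rw [ContinuousLinearMap.smul_apply, hTu]
        have h' : t • (μ • u) = (t : ℂ) • (μ • u) := by norm_num
        rw [h', smul_smul]
      calc (inner ℂ u (NormedSpace.exp (t • T) v₀) : ℂ)
          = inner ℂ (ContinuousLinearMap.adjoint (NormedSpace.exp (t • T)) u) v₀ :=
            (ContinuousLinearMap.adjoint_inner_left _ v₀ u).symm
        _ = inner ℂ (Complex.exp ((t : ℂ) * μ) • u) v₀ := by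
            rw [hadj, exp_apply_eig' _ _ _ heig]
        _ = Complex.exp (t • (-μ)) * (inner ℂ u v₀ : ℂ) := by
            rw [inner_smul_left]
            congr 1
            rw [← Complex.exp_conj, map_mul, Complex.conj_ofReal, hconj, Complex.real_smul]
    have hLten : Tendsto (fun t : ℝ => Complex.exp (t • (-μ)) * (inner ℂ u v₀ : ℂ)) atTop
        (nhds (inner ℂ u w : ℂ)) := by
      have h' := ((innerSL ℂ u).continuous.tendsto w).comp hconv
      exact h'.congr key
    exact tendsto_exp_smul_imaginary (-μ) (by simp [hμ]) _ _ hLten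
end

section
/- Let T be a linear operator on a finite-dimensional complex inner product space with all eigenvalues having nonpositive real part and no nontrivial Jordan blocks for imaginary-axis eigenvalues. Let w satisfy T(w) = 0. Then for v₀ ∈ V, exp(tT)v₀ → w as t → +∞ if and only if ⟨u, v₀⟩ = ⟨u, w⟩ for every eigenvector u of T* whose eigenvalue has zero real part. -/
open Filter Module

set_option maxHeartbeats 1000000
set_option synthInstance.maxHeartbeats 400000

section Helpers

variable {V : Type*} [NormedAddCommGroup V] [InnerProductSpace ℂ V] [FiniteDimensional ℂ V]

local notation "⟪" x ", " y "⟫" => @inner ℂ _ _ x y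

private lemma exp_apply_tsum (B : V →L[ℂ] V) (y : V) :
    NormedSpace.exp B y = ∑' n : ℕ, ((n.factorial : ℂ))⁻¹ • (B ^ n) y := by
  have h := (ContinuousLinearMap.apply ℂ V y).map_tsum
    (NormedSpace.expSeries_summable' (𝕂 := ℂ) B)
  rw [NormedSpace.exp_eq_tsum ℂ]
  simpa using h

private lemma exp_apply_eig (B : V →L[ℂ] V) (c : ℂ) (y : V) (h : B y = c • y) :
    NormedSpace.exp B y = Complex.exp c • y := by
  have hpow : ∀ n : ℕ, (B ^ n) y = c ^ n • y := by
    intro n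
    induction n with
    | zero => simp
    | succ n ih => rw [pow_succ, ContinuousLinearMap.mul_apply, h, map_smul, ih,
        smul_smul, ← pow_succ']
  have h2 := (ContinuousLinearMap.toSpanSingleton ℂ y).map_tsum
    (NormedSpace.expSeries_summable' (𝕂 := ℂ) c)
  simp only [ContinuousLinearMap.toSpanSingleton_apply] at h2
  calc NormedSpace.exp B y = ∑' n : ℕ, ((n.factorial : ℂ))⁻¹ • (B ^ n) y :=
        exp_apply_tsum B y
    _ = ∑' n : ℕ, (((n.factorial : ℂ))⁻¹ • c ^ n) • y := by
        simp_rw [hpow, smul_smul, smul_eq_mul]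
    _ = (∑' n : ℕ, ((n.factorial : ℂ))⁻¹ • c ^ n) • y := h2.symm
    _ = Complex.exp c • y := by rw [Complex.exp_eq_exp_ℂ, NormedSpace.exp_eq_tsum ℂ]

private lemma exp_fixed (B : V →L[ℂ] V) (w : V) (hw : B w = 0) :
    NormedSpace.exp B w = w := by
  simpa using exp_apply_eig B 0 w (by simp [hw])

private lemma inner_exp (T : V →L[ℂ] V) (t : ℝ) {μ : ℂ} {u : V}
    (hu : ContinuousLinearMap.adjoint T u = μ • u) (v : V) :
    ⟪u, NormedSpace.exp (t • T) v⟫ =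
      Complex.exp ((t : ℂ) * (starRingEnd ℂ) μ) * ⟪u, v⟫ := by
  rw [← ContinuousLinearMap.adjoint_inner_left]
  have hadj : ContinuousLinearMap.adjoint (NormedSpace.exp (t • T)) =
      NormedSpace.exp (t • ContinuousLinearMap.adjoint T) := by
    rw [← ContinuousLinearMap.star_eq_adjoint, NormedSpace.star_exp, star_smul,
      star_trivial, ContinuousLinearMap.star_eq_adjoint]
  rw [hadj, exp_apply_eig _ ((t : ℂ) * μ) u (by
    rw [ContinuousLinearMap.smul_apply, hu, mul_smul, Complex.coe_smul]),
    inner_smul_left, ← Complex.exp_conj, map_mul, Complex.conj_ofReal]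

private lemma orth_gen (T : V →L[ℂ] V) {μ lam : ℂ} {u y : V}
    (hu : ContinuousLinearMap.adjoint T u = μ • u)
    (hy : y ∈ Module.End.maxGenEigenspace (T : V →ₗ[ℂ] V) lam)
    (hne : (starRingEnd ℂ) μ ≠ lam) : ⟪u, y⟫ = 0 := by
  obtain ⟨k, hk⟩ := (Module.End.mem_maxGenEigenspace _ _ _).mp hy
  have key : ∀ (k : ℕ) (z : V),
      ⟪u, (((T : V →ₗ[ℂ] V) - lam • 1) ^ k) z⟫ = ((starRingEnd ℂ) μ - lam) ^ k * ⟪u, z⟫ := by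
    intro k
    induction k with
    | zero => intro z; simp
    | succ k ih =>
      intro z
      rw [pow_succ, Module.End.mul_apply, ih]
      have h1 : ⟪u, ((T : V →ₗ[ℂ] V) - lam • 1) z⟫ = ((starRingEnd ℂ) μ - lam) * ⟪u, z⟫ := by
        simp only [LinearMap.sub_apply, LinearMap.smul_apply, Module.End.one_apply,
          ContinuousLinearMap.coe_coe]
        rw [inner_sub_right, inner_smul_right]
        have h2 : ⟪u, T z⟫ = (starRingEnd ℂ) μ * ⟪u, z⟫ := by
          rw [← ContinuousLinearMap.adjoint_inner_left, hu, inner_smul_left]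
        rw [h2]; ring
      rw [h1]; ring
  have h0 := key k y
  rw [hk] at h0
  simp only [inner_zero_right] at h0
  rcases mul_eq_zero.mp h0.symm with h | h
  · exact absurd (pow_eq_zero_iff' .. |>.mp h).1 (sub_ne_zero.mpr hne)
  · exact h

private lemma pow_mul_exp_neg_mul (n : ℕ) {b : ℝ} (hb : 0 < b) :
    Tendsto (fun t : ℝ => t ^ n * Real.exp (-(b * t))) atTop (nhds 0) := by
  have h2 : Tendsto (fun t : ℝ => b * t) atTop atTop :=
    Tendsto.const_mul_atTop hb tendsto_id
  have h3 := (Real.tendsto_pow_mul_exp_neg_atTop_nhds_zero n).comp h2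
  have h4 := h3.const_mul ((b ^ n)⁻¹)
  rw [mul_zero] at h4
  refine h4.congr fun t => ?_
  simp only [Function.comp]
  rw [mul_pow]
  field_simp

private lemma coeff_tendsto (n : ℕ) (a : ℂ) {lam : ℂ} (hlam : lam.re < 0) :
    Tendsto (fun t : ℝ => Complex.exp ((t : ℂ) * lam) * a * (t : ℂ) ^ n) atTop (nhds 0) := by
  rw [tendsto_zero_iff_norm_tendsto_zero]
  have hb : (0:ℝ) < -lam.re := by linarith
  have base := (pow_mul_exp_neg_mul n hb).const_mul ‖a‖
  rw [mul_zero] at base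
  refine Tendsto.congr' ?_ base
  filter_upwards [eventually_ge_atTop (0:ℝ)] with t ht
  rw [norm_mul, norm_mul, Complex.norm_exp]
  have hre : ((t : ℂ) * lam).re = t * lam.re := by simp [Complex.mul_re]
  rw [hre, norm_pow, Complex.norm_real, Real.norm_eq_abs, abs_of_nonneg ht]
  ring_nf

private lemma decay (T : V →L[ℂ] V) {lam : ℂ} (hlam : lam.re < 0) {y : V}
    (hy : y ∈ Module.End.maxGenEigenspace (T : V →ₗ[ℂ] V) lam) :
    Tendsto (fun t : ℝ => NormedSpace.exp (t • T) y) atTop (nhds 0) := by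
  obtain ⟨k, hk⟩ := (Module.End.mem_maxGenEigenspace _ _ _).mp hy
  set N : V →L[ℂ] V := T - lam • 1 with hN
  have hstep : ∀ z : V, ((T : V →ₗ[ℂ] V) - lam • 1) z = N z := fun z => by simp [hN]
  have hiter : ∀ (m : ℕ) (z : V), (((T : V →ₗ[ℂ] V) - lam • 1) ^ m) z = (N ^ m) z := by
    intro m
    induction m with
    | zero => intro z; simp
    | succ m ih =>
      intro z
      rw [pow_succ, pow_succ, Module.End.mul_apply, ContinuousLinearMap.mul_apply, hstep, ih]
  have hk' : (N ^ k) y = 0 := by rw [← hiter]; exact hk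
  have hNn : ∀ n, k ≤ n → (N ^ n) y = 0 := by
    intro n hn
    have h1 : N ^ n = N ^ (n - k) * N ^ k := by rw [← pow_add]; congr 1; omega
    rw [h1, ContinuousLinearMap.mul_apply, hk', map_zero]
  have hform : ∀ t : ℝ, NormedSpace.exp (t • T) y
      = ∑ n ∈ Finset.range k,
          (Complex.exp ((t:ℂ) * lam) * ((n.factorial:ℂ))⁻¹ * (t:ℂ) ^ n) • ((N ^ n) y) := by
    intro t
    have hsplit : t • T = t • (lam • (1 : V →L[ℂ] V)) + t • N := by
      rw [← smul_add]
      congr 1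
      rw [hN, add_sub_cancel]
    have hcomm : Commute (t • (lam • (1 : V →L[ℂ] V))) (t • N) :=
      (((Commute.one_left N).smul_left lam).smul_left t).smul_right t
    rw [hsplit, (show NormedSpace.exp (t • (lam • (1 : V →L[ℂ] V)) + t • N) = NormedSpace.exp (t • (lam • (1 : V →L[ℂ] V))) * NormedSpace.exp (t • N) by letI : NormedAlgebra ℚ (V →L[ℂ] V) := .restrictScalars ℚ ℂ _; exact NormedSpace.exp_add_of_commute hcomm), ContinuousLinearMap.mul_apply]
    have hexpN : NormedSpace.exp (t • N) y
        = ∑ n ∈ Finset.range k, (((n.factorial:ℂ))⁻¹ * (t:ℂ) ^ n) • ((N ^ n) y) := by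
      rw [exp_apply_tsum]
      have hterm : ∀ n : ℕ,
          ((n.factorial : ℂ))⁻¹ • ((t • N) ^ n) y
            = (((n.factorial:ℂ))⁻¹ * (t:ℂ) ^ n) • ((N ^ n) y) := by
        intro n
        rw [smul_pow, ContinuousLinearMap.smul_apply, mul_smul]
        congr 1
        rw [← Complex.coe_smul]
        norm_cast
      rw [tsum_congr hterm]
      refine tsum_eq_sum fun n hn => ?_
      rw [hNn n (by simpa using hn), smul_zero]
    rw [hexpN, map_sum]
    refine Finset.sum_congr rfl fun n _ => ?_
    rw [exp_apply_eig _ ((t:ℂ) * lam) _ (by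
        rw [ContinuousLinearMap.smul_apply, ContinuousLinearMap.smul_apply,
          ContinuousLinearMap.one_apply, ← Complex.coe_smul, smul_smul]),
      smul_smul]
    ring_nf
  have h0 : Tendsto (fun t : ℝ => ∑ n ∈ Finset.range k,
      (Complex.exp ((t:ℂ) * lam) * ((n.factorial:ℂ))⁻¹ * (t:ℂ) ^ n) • ((N ^ n) y))
      atTop (nhds 0) := by
    have hz : (0 : V) = ∑ n ∈ Finset.range k, (0 : V) := by simp
    rw [hz]
    refine tendsto_finset_sum _ fun n _ => ?_
    simpa using (coeff_tendsto n ((n.factorial:ℂ))⁻¹ hlam).smul_const ((N ^ n) y)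
  exact h0.congr fun t => (hform t).symm

private lemma ker_pow_le {S : V →ₗ[ℂ] V}
    (h2 : LinearMap.ker (S ^ 2) = LinearMap.ker S) :
    ∀ m : ℕ, LinearMap.ker (S ^ m) ≤ LinearMap.ker S := by
  intro m
  induction m with
  | zero =>
    intro z hz
    simp only [pow_zero, LinearMap.mem_ker, Module.End.one_apply] at hz
    simp [LinearMap.mem_ker, hz]
  | succ m ih =>
    intro z hz
    simp only [LinearMap.mem_ker] at hz ⊢
    have hSz : S z ∈ LinearMap.ker (S ^ m) := by
      simp only [LinearMap.mem_ker]
      rw [← Module.End.mul_apply, ← pow_succ]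
      exact hz
    have hSz' : S (S z) = 0 := ih hSz
    have : z ∈ LinearMap.ker (S ^ 2) := by
      simp only [LinearMap.mem_ker, pow_two, Module.End.mul_apply]
      exact hSz'
    rw [h2] at this
    exact this

end Helpers

/-- Necessary and sufficient condition for attraction: given `T` with eigenvalues of
nonpositive real part and no nontrivial Jordan blocks on the imaginary axis, and a fixed
point `w` of `T`, the trajectory `exp(tT) v₀` converges to `w` iff `v₀` and `w` have equal
pairings with every eigenvector of `T*` whose eigenvalue has zero real part. -/
theorem tendsto_iff_pairing
    {V : Type*} [NormedAddCommGroup V] [InnerProductSpace ℂ V] [FiniteDimensional ℂ V]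
    (T : V →L[ℂ] V)
    (hspec : ∀ μ : ℂ, Module.End.HasEigenvalue (T : V →ₗ[ℂ] V) μ → μ.re ≤ 0)
    (hsemi : ∀ μ : ℂ, μ.re = 0 →
      LinearMap.ker (((T : V →ₗ[ℂ] V) - μ • 1) ^ 2) = LinearMap.ker ((T : V →ₗ[ℂ] V) - μ • 1))
    (w : V) (hw : T w = 0) (v₀ : V) :
    Tendsto (fun t : ℝ => NormedSpace.exp (t • T) v₀) atTop (nhds w) ↔
      ∀ (μ : ℂ) (u : V), Module.End.HasEigenvector
          ((ContinuousLinearMap.adjoint T : V →L[ℂ] V) : V →ₗ[ℂ] V) μ u →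
        μ.re = 0 → (inner ℂ u v₀ : ℂ) = inner ℂ u w := by
  have hfix : ∀ t : ℝ, NormedSpace.exp (t • T) w = w := fun t =>
    exp_fixed _ w (by rw [ContinuousLinearMap.smul_apply, hw, smul_zero])
  constructor
  · intro h μ u hu hre
    have huu : ContinuousLinearMap.adjoint T u = μ • u := by
      simpa using hu.apply_eq_smul
    have hlim : Tendsto (fun t : ℝ =>
        Complex.exp ((t:ℂ) * (starRingEnd ℂ) μ) * (inner ℂ u v₀ : ℂ)) atTop
        (nhds (inner ℂ u w : ℂ)) := by
      have h1 := Filter.Tendsto.inner (𝕜 := ℂ) (tendsto_const_nhds (x := u) (f := atTop)) h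
      exact h1.congr fun t => inner_exp T t huu v₀
    have hinv : ∀ t : ℝ, Complex.exp ((t:ℂ) * (starRingEnd ℂ) μ) * (inner ℂ u w : ℂ)
        = (inner ℂ u w : ℂ) := fun t => by
      rw [← inner_exp T t huu w, hfix t]
    by_cases hμ : μ = 0
    · subst hμ
      simp only [map_zero, mul_zero, Complex.exp_zero, one_mul] at hlim
      exact (tendsto_nhds_unique hlim tendsto_const_nhds).symm
    · have him : μ.im ≠ 0 := fun h0 => hμ (Complex.ext hre h0)
      have hL : (inner ℂ u w : ℂ) = 0 := by
        have ht0 := hinv (Real.pi / μ.im)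
        have harg : ((Real.pi / μ.im : ℝ) : ℂ) * (starRingEnd ℂ) μ
            = -(Real.pi * Complex.I) := by
          apply Complex.ext <;>
            simp [Complex.mul_re, Complex.mul_im, hre] <;> field_simp
        rw [harg, Complex.exp_neg, Complex.exp_pi_mul_I] at ht0
        have h2 : (2 : ℂ) * (inner ℂ u w : ℂ) = 0 := by
          have : ((-1 : ℂ))⁻¹ * (inner ℂ u w : ℂ) = (inner ℂ u w : ℂ) := ht0
          linear_combination -this
        exact (mul_eq_zero.mp h2).resolve_left (by norm_num)
      rw [hL] at hlim ⊢
      have hnorm : Tendsto (fun t : ℝ =>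
          ‖Complex.exp ((t:ℂ) * (starRingEnd ℂ) μ) * (inner ℂ u v₀ : ℂ)‖) atTop
          (nhds 0) := by
        simpa using tendsto_zero_iff_norm_tendsto_zero.mp hlim
      have hconst : ∀ t : ℝ,
          ‖Complex.exp ((t:ℂ) * (starRingEnd ℂ) μ) * (inner ℂ u v₀ : ℂ)‖
            = ‖(inner ℂ u v₀ : ℂ)‖ := by
        intro t
        rw [norm_mul, Complex.norm_exp]
        have : ((t:ℂ) * (starRingEnd ℂ) μ).re = 0 := by
          simp [Complex.mul_re, hre]
        rw [this, Real.exp_zero, one_mul]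
      have := tendsto_nhds_unique (hnorm.congr hconst) tendsto_const_nhds
      simpa using norm_eq_zero.mp this.symm
  · intro hp
    set x := v₀ - w with hx
    have hmem : x ∈ ⨆ lam : ℂ, Module.End.maxGenEigenspace (T : V →ₗ[ℂ] V) lam := by
      rw [Module.End.iSup_maxGenEigenspace_eq_top]; trivial
    obtain ⟨f, hf, hsum⟩ := (Submodule.mem_iSup_iff_exists_finsupp _ _).mp hmem
    have hzero : ∀ lam : ℂ, 0 ≤ lam.re → f lam = 0 := by
      intro lam hlam0
      by_cases hsupp : f lam = 0
      · exact hsupp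
      · exfalso
        obtain ⟨k, hk⟩ := (Module.End.mem_maxGenEigenspace _ _ _).mp (hf lam)
        have heig : Module.End.HasEigenvalue (T : V →ₗ[ℂ] V) lam := by
          refine Module.End.hasEigenvalue_of_hasGenEigenvalue
            (k := k) (Module.End.hasGenEigenvalue_iff.mpr ?_)
          rw [Module.End.genEigenspace_nat]
          exact Submodule.ne_bot_iff _ |>.mpr ⟨f lam, LinearMap.mem_ker.mpr hk, hsupp⟩
        have hre0 : lam.re = 0 := le_antisymm (hspec lam heig) hlam0
        set S : V →ₗ[ℂ] V := (T : V →ₗ[ℂ] V) - lam • 1 with hS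
        set z := f lam with hz
        have hzker : S z = 0 := ker_pow_le (hsemi lam hre0) k (LinearMap.mem_ker.mpr hk)
        have hU : z ∈ LinearMap.range S := by
          rw [← Submodule.orthogonal_orthogonal (LinearMap.range S)]
          rw [Submodule.mem_orthogonal]
          intro v hv
          have hv' := (Submodule.mem_orthogonal _ _).mp hv
          have hveig : ContinuousLinearMap.adjoint T v = (starRingEnd ℂ) lam • v := by
            have hall : ∀ a : V,
                (inner ℂ a (ContinuousLinearMap.adjoint T v - (starRingEnd ℂ) lam • v) : ℂ)
                  = 0 := by
              intro a
              rw [inner_sub_right, inner_smul_right,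
                ContinuousLinearMap.adjoint_inner_right]
              have h3 := hv' (S a) ⟨a, rfl⟩
              have h4 : (inner ℂ (S a) v : ℂ)
                  = (inner ℂ (T a) v : ℂ) - (starRingEnd ℂ) lam * (inner ℂ a v : ℂ) := by
                simp only [hS, LinearMap.sub_apply, LinearMap.smul_apply, Module.End.one_apply,
                  ContinuousLinearMap.coe_coe]
                rw [inner_sub_left, inner_smul_left]
              rw [h3] at h4
              linear_combination -h4
            have h5 := hall (ContinuousLinearMap.adjoint T v - (starRingEnd ℂ) lam • v)
            rwa [inner_self_eq_zero, sub_eq_zero] at h5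
          by_cases hv0 : v = 0
          · simp [hv0]
          · have hpv := hp ((starRingEnd ℂ) lam) v
              (Module.End.hasEigenvector_iff.mpr
                ⟨Module.End.mem_eigenspace_iff.mpr (by simpa using hveig), hv0⟩)
              (by simp [hre0])
            have hvx : (inner ℂ v x : ℂ) = 0 := by
              rw [hx, inner_sub_right, hpv, sub_self]
            have hsum' : (inner ℂ v x : ℂ) = ∑ lam' ∈ f.support, (inner ℂ v (f lam') : ℂ) := by
              rw [← hsum, Finsupp.sum, inner_sum]
            have hterms : ∀ lam' ∈ f.support, lam' ≠ lam → (inner ℂ v (f lam') : ℂ) = 0 := by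
              intro lam' _ hne
              exact orth_gen T hveig (hf lam')
                (by rw [Complex.conj_conj]; exact hne.symm)
            by_cases hmem' : lam ∈ f.support
            · have h6 := Finset.sum_eq_single_of_mem lam hmem'
                (fun b hb hb' => hterms b hb hb')
              rw [hsum', h6] at hvx
              exact hvx
            · rw [hz, Finsupp.notMem_support_iff.mp hmem', inner_zero_right]
        obtain ⟨g, hg⟩ := hU
        have hg2 : g ∈ LinearMap.ker (S ^ 2) := by
          simp only [LinearMap.mem_ker, pow_two, Module.End.mul_apply]
          rw [hg]
          exact hzker
        rw [hsemi lam hre0] at hg2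
        have : z = 0 := by rw [← hg]; exact LinearMap.mem_ker.mp hg2
        exact hsupp this
    have hxlim : Tendsto (fun t : ℝ => NormedSpace.exp (t • T) x) atTop (nhds 0) := by
      have hterm : ∀ lam ∈ f.support,
          Tendsto (fun t : ℝ => NormedSpace.exp (t • T) (f lam)) atTop (nhds 0) := by
        intro lam hlam
        by_cases h0 : lam.re < 0
        · exact decay T h0 (hf lam)
        · exact absurd (hzero lam (not_lt.mp h0)) (Finsupp.mem_support_iff.mp hlam)
      have h1 := tendsto_finset_sum f.support fun lam hlam => hterm lam hlam
      rw [Finset.sum_const_zero] at h1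
      refine h1.congr fun t => ?_
      rw [← hsum, Finsupp.sum, map_sum]
    have hconv := hxlim.add_const w
    rw [zero_add] at hconv
    exact hconv.congr fun t => by rw [hx, map_sub, hfix t, sub_add_cancel]
end

section
/- With T as above (eigenvalues with nonpositive real parts, no nontrivial Jordan structure on the imaginary axis) and w a fixed point of T, the attraction domain {v ∈ V : exp(tT)v → w as t→∞} equals the affine subspace w + E_−, where E_− is the sum of the generalized eigenspaces of T for eigenvalues with strictly negative real part. -/
open Filter Module Finset

set_option linter.unusedSectionVars false

section Aux


variable {V : Type*} [NormedAddCommGroup V] [NormedSpace ℂ V] [FiniteDimensional ℂ V]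

omit [FiniteDimensional ℂ V] in
lemma pow_apply_eq' (T : V →L[ℂ] V) (μ : ℂ) (n : ℕ) (u : V) :
    (((T - μ • (1 : V →L[ℂ] V)) ^ n) u)
      = ((((T : V →ₗ[ℂ] V)) - μ • 1) ^ n) u := by
  induction n generalizing u with
  | zero => simp
  | succ n ih =>
    have h1 : (T - μ • (1 : V →L[ℂ] V)) u = (((T : V →ₗ[ℂ] V)) - μ • 1) u := by simp
    rw [pow_succ, pow_succ, ContinuousLinearMap.mul_apply, Module.End.mul_apply, h1, ih]

lemma exp_apply_of_genEig' (T : V →L[ℂ] V) (μ c : ℂ) (k : ℕ) (u : V)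
    (hu : ((((T : V →ₗ[ℂ] V)) - μ • 1) ^ k) u = 0) :
    NormedSpace.exp (c • T) u
      = Complex.exp (c * μ) • ∑ n ∈ Finset.range k,
          ((n.factorial : ℂ)⁻¹ * c ^ n) • (((((T : V →ₗ[ℂ] V)) - μ • 1) ^ n) u) := by
  set N : V →L[ℂ] V := T - μ • 1 with hNdef
  have hN : ∀ n, (N ^ n) u = ((((T : V →ₗ[ℂ] V)) - μ • 1) ^ n) u := fun n =>
    pow_apply_eq' T μ n u
  have key : c • T = algebraMap ℂ (V →L[ℂ] V) (c * μ) + c • N := by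
    rw [hNdef, Algebra.algebraMap_eq_smul_one, smul_sub, mul_smul]
    abel
  have hucomm : Commute (algebraMap ℂ (V →L[ℂ] V) (c * μ)) (c • N) :=
    Algebra.commutes _ _
  rw [key, NormedSpace.exp_add_of_commute_of_mem_ball (𝕂 := ℂ) hucomm
      (by simp [NormedSpace.expSeries_radius_eq_top]) (by simp [NormedSpace.expSeries_radius_eq_top]), ← NormedSpace.algebraMap_exp_comm,
    ContinuousLinearMap.mul_apply]
  have hexpN : NormedSpace.exp (c • N) u
      = ∑ n ∈ Finset.range k, ((n.factorial : ℂ)⁻¹ * c ^ n) • ((N ^ n) u) := by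
    have hsum := NormedSpace.expSeries_summable' (𝕂 := ℂ) (c • N)
    have h2 := (ContinuousLinearMap.apply ℂ V u).map_tsum hsum
    rw [NormedSpace.exp_eq_tsum ℂ]
    simp only [ContinuousLinearMap.apply_apply] at h2
    rw [h2]
    have hzero : ∀ n ∉ Finset.range k,
        (((n.factorial : ℂ)⁻¹) • (c • N) ^ n) u = 0 := by
      intro n hn
      rw [Finset.mem_range, not_lt] at hn
      have h0 : (N ^ n) u = 0 := by
        have h3 : N ^ n = N ^ (n - k) * N ^ k := by
          rw [← pow_add]; congr 1; omega
        rw [h3, ContinuousLinearMap.mul_apply, hN k, hu, map_zero]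
      rw [smul_pow, ContinuousLinearMap.smul_apply, ContinuousLinearMap.smul_apply, h0]
      simp
    rw [tsum_eq_sum hzero]
    refine Finset.sum_congr rfl fun n _ => ?_
    rw [smul_pow, ContinuousLinearMap.smul_apply, ContinuousLinearMap.smul_apply, smul_smul]
  rw [hexpN, Algebra.algebraMap_eq_smul_one, ContinuousLinearMap.smul_apply,
    ContinuousLinearMap.one_apply, ← Complex.exp_eq_exp_ℂ]
  congr 1
  exact Finset.sum_congr rfl fun n _ => by rw [hN]

lemma exp_apply_eig'_s8 (T : V →L[ℂ] V) (μ c : ℂ) (u : V)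
    (hu : (((T : V →ₗ[ℂ] V)) - μ • 1) u = 0) :
    NormedSpace.exp (c • T) u = Complex.exp (c * μ) • u := by
  have h := exp_apply_of_genEig' T μ c 1 u (by simpa using hu)
  simpa using h

lemma real_smul_exp_eq (T : V →L[ℂ] V) (t : ℝ) :
    NormedSpace.exp (t • T) = NormedSpace.exp (((t : ℂ)) • T) := by
  rw [Complex.coe_smul]

lemma coeff_tendsto_zero {r : ℝ} (hr : r < 0) (n : ℕ) :
    Tendsto (fun t : ℝ => t ^ n * Real.exp (r * t)) atTop (nhds 0) := by
  have hr' : (0 : ℝ) < -r := by linarith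
  have h1 : Tendsto (fun t : ℝ => (-r) * t) atTop atTop :=
    tendsto_id.const_mul_atTop hr'
  have h2 := (Real.tendsto_pow_mul_exp_neg_atTop_nhds_zero n).comp h1
  have h3 := h2.const_mul (((-r) ^ n)⁻¹)
  rw [mul_zero] at h3
  refine h3.congr' ?_
  filter_upwards [eventually_ge_atTop 0] with t ht
  have hne : (-r) ^ n ≠ 0 := pow_ne_zero _ (by linarith)
  have : -(-r * t) = r * t := by ring
  simp only [Function.comp_apply, this, mul_pow]
  field_simp

/-- Decay on a single stable generalised eigenspace. -/
lemma tendsto_exp_stable (T : V →L[ℂ] V) {μ : ℂ} (hμ : μ.re < 0) {u : V}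
    (hu : u ∈ Module.End.maxGenEigenspace (T : V →ₗ[ℂ] V) μ) :
    Tendsto (fun t : ℝ => NormedSpace.exp (t • T) u) atTop (nhds 0) := by
  obtain ⟨k, hk⟩ := (Module.End.mem_maxGenEigenspace _ _ _).mp hu
  have heq : ∀ t : ℝ, NormedSpace.exp (t • T) u
      = ∑ n ∈ Finset.range k,
          (Complex.exp ((t : ℂ) * μ) * ((n.factorial : ℂ)⁻¹ * (t : ℂ) ^ n)) •
            (((((T : V →ₗ[ℂ] V)) - μ • 1) ^ n) u) := by
    intro t
    rw [real_smul_exp_eq, exp_apply_of_genEig' T μ _ k u hk, Finset.smul_sum]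
    exact Finset.sum_congr rfl fun n _ => by rw [smul_smul]
  simp only [heq]
  rw [show (0 : V) = ∑ n ∈ Finset.range k, (0 : V) by simp]
  refine tendsto_finset_sum _ fun n _ => ?_
  rw [show (0 : V) = (0 : ℂ) • ((((((T : V →ₗ[ℂ] V)) - μ • 1) ^ n) u)) by simp]
  refine Tendsto.smul_const ?_ _
  rw [tendsto_zero_iff_norm_tendsto_zero]
  have hbnd : ∀ᶠ t : ℝ in atTop,
      ‖Complex.exp ((t : ℂ) * μ) * ((n.factorial : ℂ)⁻¹ * (t : ℂ) ^ n)‖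
        = (n.factorial : ℝ)⁻¹ * (t ^ n * Real.exp (μ.re * t)) := by
    filter_upwards [eventually_ge_atTop 0] with t ht
    rw [norm_mul, norm_mul, norm_pow, Complex.norm_exp]
    simp only [norm_inv, Complex.norm_natCast, Complex.norm_real, Real.norm_eq_abs]
    rw [abs_of_nonneg ht]
    have : ((t : ℂ) * μ).re = μ.re * t := by simp [Complex.mul_re]; ring
    rw [this]
    ring
  have hlim := (coeff_tendsto_zero hμ n).const_mul ((n.factorial : ℝ)⁻¹)
  rw [mul_zero] at hlim
  exact hlim.congr' (by filter_upwards [hbnd] with t ht using ht.symm)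

/-- On the centre, generalised eigenspaces are genuine eigenspaces. -/
lemma maxGen_eq_ker (T : V →L[ℂ] V)
    (hsemi : ∀ μ : ℂ, μ.re = 0 →
      LinearMap.ker (((T : V →ₗ[ℂ] V) - μ • 1) ^ 2) = LinearMap.ker ((T : V →ₗ[ℂ] V) - μ • 1))
    {μ : ℂ} (hμ : μ.re = 0) :
    Module.End.maxGenEigenspace (T : V →ₗ[ℂ] V) μ
      = LinearMap.ker ((T : V →ₗ[ℂ] V) - μ • 1) := by
  set p : V →ₗ[ℂ] V := (T : V →ₗ[ℂ] V) - μ • 1 with hp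
  have claim : ∀ (k : ℕ) (x : V), (p ^ k) x = 0 → p x = 0 := by
    intro k
    induction k with
    | zero =>
      intro x hk
      simp only [pow_zero, Module.End.one_apply] at hk
      simp [hk]
    | succ k ih =>
      intro x hk
      have hpx : p (p x) = 0 := by
        apply ih
        rw [← Module.End.mul_apply, ← pow_succ]
        exact hk
      have hx2 : x ∈ LinearMap.ker (p ^ 2) := by
        rw [LinearMap.mem_ker, pow_two, Module.End.mul_apply]
        exact hpx
      rw [hsemi μ hμ] at hx2
      exact hx2
  refine le_antisymm ?_ ?_
  · intro x hx
    obtain ⟨k, hk⟩ := (Module.End.mem_maxGenEigenspace _ _ _).mp hx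
    exact LinearMap.mem_ker.mpr (claim k x hk)
  · intro x hx
    rw [Module.End.mem_maxGenEigenspace]
    exact ⟨1, by simpa [hp] using LinearMap.mem_ker.mp hx⟩

lemma strictMono_add_le {φ : ℕ → ℕ} (hφ : StrictMono φ) (m n : ℕ) :
    φ m + n ≤ φ (m + n) := by
  induction n with
  | zero => simp
  | succ n ih =>
    have h1 : φ (m + n) < φ (m + n + 1) := hφ (by omega)
    have h3 : φ (m + (n + 1)) = φ (m + n + 1) := by rw [add_assoc]
    omega

lemma tendsto_of_mem_stable (T : V →L[ℂ] V) {u : V}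
    (hu : u ∈ ⨆ μ ∈ {μ : ℂ | μ.re < 0},
        Module.End.maxGenEigenspace (T : V →ₗ[ℂ] V) μ) :
    Tendsto (fun t : ℝ => NormedSpace.exp (t • T) u) atTop (nhds 0) := by
  rw [iSup_subtype'] at hu
  refine Submodule.iSup_induction' _
    (motive := fun x _ => Tendsto (fun t : ℝ => NormedSpace.exp (t • T) x) atTop (nhds 0))
    ?_ ?_ ?_ hu
  · rintro ⟨μ, hμ⟩ x hx
    exact tendsto_exp_stable T hμ hx
  · simp only [map_zero]
    exact tendsto_const_nhds
  · intro x y hx hy hhx hhy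
    have h := hhx.add hhy
    rw [add_zero] at h
    simpa only [map_add] using h

lemma mem_stable_of_tendsto (T : V →L[ℂ] V)
    (hspec : ∀ μ : ℂ, Module.End.HasEigenvalue (T : V →ₗ[ℂ] V) μ → μ.re ≤ 0)
    (hsemi : ∀ μ : ℂ, μ.re = 0 →
      LinearMap.ker (((T : V →ₗ[ℂ] V) - μ • 1) ^ 2) = LinearMap.ker ((T : V →ₗ[ℂ] V) - μ • 1))
    {u : V}
    (hu : Tendsto (fun t : ℝ => NormedSpace.exp (t • T) u) atTop (nhds 0)) :
    u ∈ ⨆ μ ∈ {μ : ℂ | μ.re < 0},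
        Module.End.maxGenEigenspace (T : V →ₗ[ℂ] V) μ := by
  classical
  set L : V →ₗ[ℂ] V := (T : V →ₗ[ℂ] V) with hLdef
  set E₀ : Submodule ℂ V := ⨆ μ ∈ {μ : ℂ | μ.re = 0}, LinearMap.ker (L - μ • 1) with hE0
  have htop : u ∈ ⨆ μ : ℂ, Module.End.maxGenEigenspace L μ := by
    rw [Module.End.iSup_maxGenEigenspace_eq_top]
    exact Submodule.mem_top
  have hsplit : (⨆ μ : ℂ, Module.End.maxGenEigenspace L μ)
      ≤ (⨆ μ ∈ {μ : ℂ | μ.re < 0}, Module.End.maxGenEigenspace L μ) ⊔ E₀ := by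
    refine iSup_le fun μ => ?_
    by_cases hbot : Module.End.maxGenEigenspace L μ = ⊥
    · rw [hbot]; exact bot_le
    · have heig : Module.End.HasEigenvalue L μ :=
        Module.End.HasUnifEigenvalue.lt zero_lt_one hbot
      rcases lt_or_eq_of_le (hspec μ heig) with h | h
      · exact le_trans (le_iSup₂ (f := fun μ _ => Module.End.maxGenEigenspace L μ) μ h)
          le_sup_left
      · rw [maxGen_eq_ker T hsemi h]
        exact le_trans (le_iSup₂ (f := fun μ _ => LinearMap.ker (L - μ • 1)) μ h) le_sup_right
  obtain ⟨a, ha, b, hb, hab⟩ := Submodule.mem_sup.mp (hsplit htop)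
  have hta : Tendsto (fun t : ℝ => NormedSpace.exp (t • T) a) atTop (nhds 0) :=
    tendsto_of_mem_stable T ha
  have htb : Tendsto (fun t : ℝ => NormedSpace.exp (t • T) b) atTop (nhds 0) := by
    have h1 : ∀ t : ℝ, NormedSpace.exp (t • T) b
        = NormedSpace.exp (t • T) u - NormedSpace.exp (t • T) a := by
      intro t
      rw [← map_sub]
      congr 1
      rw [← hab]; abel
    simp only [h1]
    simpa using hu.sub hta
  -- the torus recurrence argument: b = 0
  have hb0 : b = 0 := by
    rw [hE0, iSup_subtype'] at hb
    obtain ⟨s, hbs⟩ := Submodule.mem_iSup_iff_exists_finset.mp hb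
    rw [iSup_subtype'] at hbs
    set c : s → ℂ := fun ν => ((ν : {μ : ℂ // μ ∈ {μ : ℂ | μ.re = 0}}) : ℂ) with hc
    have hcre : ∀ ν : s, (c ν).re = 0 := fun ν =>
      (ν : {μ : ℂ // μ ∈ {μ : ℂ | μ.re = 0}}).2
    set x : ℕ → (s → ℂ) := fun n ν => Complex.exp ((n : ℂ) * c ν) with hx
    have hxnorm : ∀ (n : ℕ) (ν : s), ‖x n ν‖ = 1 := by
      intro n ν
      rw [hx]
      simp only [Complex.norm_exp]
      have : ((n : ℂ) * c ν).re = 0 := by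
        rw [Complex.mul_re]
        simp [hcre ν]
      rw [this, Real.exp_zero]
    have hxmem : ∀ n, x n ∈ Metric.closedBall (0 : s → ℂ) 1 := by
      intro n
      rw [Metric.mem_closedBall, dist_zero_right]
      refine (pi_norm_le_iff_of_nonneg zero_le_one).mpr fun ν => ?_
      rw [hxnorm n ν]
    obtain ⟨lim, -, φ, hφ, hlim⟩ :=
      tendsto_subseq_of_bounded Metric.isBounded_closedBall hxmem
    have hlimν : ∀ ν : s, Tendsto (fun k => x (φ k) ν) atTop (nhds (lim ν)) := fun ν =>
      ((continuous_apply ν).tendsto lim).comp hlim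
    have hlimne : ∀ ν : s, lim ν ≠ 0 := by
      intro ν
      have h1 : Tendsto (fun k => ‖x (φ k) ν‖) atTop (nhds ‖lim ν‖) := (hlimν ν).norm
      have h2 : Tendsto (fun _ : ℕ => (1 : ℝ)) atTop (nhds ‖lim ν‖) := by
        refine h1.congr fun k => ?_
        rw [hxnorm]
      have h3 : ‖lim ν‖ = 1 := tendsto_nhds_unique h2 tendsto_const_nhds
      intro h0
      rw [h0, norm_zero] at h3
      norm_num at h3
    set d : ℕ → ℕ := fun k => φ (2 * k) - φ k with hd
    have hφle : ∀ k, φ k ≤ φ (2 * k) := fun k => hφ.monotone (by omega)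
    have hdk : ∀ k, k ≤ d k := by
      intro k
      have h1 := strictMono_add_le hφ k k
      have h3 : φ (k + k) = φ (2 * k) := by congr 1; omega
      rw [hd]
      simp only
      omega
    have hdiv : ∀ ν : s,
        Tendsto (fun k => Complex.exp ((d k : ℂ) * c ν)) atTop (nhds 1) := by
      intro ν
      have h2k : Tendsto (fun k : ℕ => 2 * k) atTop atTop :=
        tendsto_atTop_mono (fun k => Nat.le_mul_of_pos_left k two_pos) tendsto_id
      have hnum : Tendsto (fun k => x (φ (2 * k)) ν) atTop (nhds (lim ν)) :=
        (hlimν ν).comp h2k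
      have hq := hnum.div (hlimν ν) (hlimne ν)
      rw [div_self (hlimne ν)] at hq
      refine hq.congr fun k => ?_
      simp only [Pi.div_apply, hx]
      rw [← Complex.exp_sub]
      congr 1
      have hcast : ((d k : ℕ) : ℂ) = ((φ (2 * k) : ℕ) : ℂ) - ((φ k : ℕ) : ℂ) := by
        rw [hd]
        simp only
        push_cast [Nat.cast_sub (hφle k)]
        ring
      rw [hcast, sub_mul]
    have hrec : Tendsto (fun k : ℕ => NormedSpace.exp ((d k : ℝ) • T) b)
        atTop (nhds b) := by
      refine Submodule.iSup_induction' _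
        (motive := fun y _ => Tendsto (fun k : ℕ => NormedSpace.exp ((d k : ℝ) • T) y)
          atTop (nhds y)) ?_ ?_ ?_ hbs
      · rintro ν y hy
        have hy' : (L - (c ν) • 1) y = 0 := LinearMap.mem_ker.mp hy
        have heq : ∀ k : ℕ, NormedSpace.exp ((d k : ℝ) • T) y
            = Complex.exp ((d k : ℂ) * c ν) • y := by
          intro k
          rw [real_smul_exp_eq, show (((d k : ℝ)) : ℂ) = ((d k : ℕ) : ℂ) by push_cast; ring,
            exp_apply_eig'_s8 T (c ν) _ y hy']
        simp only [heq]
        have h := (hdiv ν).smul_const y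
        rwa [one_smul] at h
      · simp only [map_zero]
        exact tendsto_const_nhds
      · intro y z hy hz hhy hhz
        have h := hhy.add hhz
        simpa only [map_add] using h
    have htbd : Tendsto (fun k : ℕ => NormedSpace.exp ((d k : ℝ) • T) b)
        atTop (nhds 0) := by
      have hdt : Tendsto (fun k : ℕ => (d k : ℝ)) atTop atTop :=
        tendsto_natCast_atTop_atTop.comp (tendsto_atTop_mono hdk tendsto_id)
      exact htb.comp hdt
    exact tendsto_nhds_unique hrec htbd
  rw [← hab, hb0, add_zero]
  exact ha

end Aux

/-- The attraction domain of a fixed point `w` of the linear flow `exp(tT)` is the affine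
subspace `w + E₋`, where `E₋` is the sum of the generalized eigenspaces of `T` for
eigenvalues with strictly negative real part. -/
theorem attraction_domain_eq_affine
    {V : Type*} [NormedAddCommGroup V] [NormedSpace ℂ V] [FiniteDimensional ℂ V]
    (T : V →L[ℂ] V)
    (hspec : ∀ μ : ℂ, Module.End.HasEigenvalue (T : V →ₗ[ℂ] V) μ → μ.re ≤ 0)
    (hsemi : ∀ μ : ℂ, μ.re = 0 →
      LinearMap.ker (((T : V →ₗ[ℂ] V) - μ • 1) ^ 2) = LinearMap.ker ((T : V →ₗ[ℂ] V) - μ • 1))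
    (w : V) (hw : T w = 0) :
    {v : V | Tendsto (fun t : ℝ => NormedSpace.exp (t • T) v) atTop (nhds w)}
      = {v : V | v - w ∈
          ⨆ μ ∈ {μ : ℂ | μ.re < 0}, Module.End.maxGenEigenspace (T : V →ₗ[ℂ] V) μ} := by
  have hfix : ∀ t : ℝ, NormedSpace.exp (t • T) w = w := by
    intro t
    rw [real_smul_exp_eq, exp_apply_eig'_s8 T 0 (t : ℂ) w (by simpa using hw)]
    simp
  ext v
  simp only [Set.mem_setOf_eq]
  have hsub : ∀ t : ℝ, NormedSpace.exp (t • T) (v - w)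
      = NormedSpace.exp (t • T) v - w := by
    intro t
    rw [map_sub, hfix]
  constructor
  · intro hT
    refine mem_stable_of_tendsto T hspec hsemi ?_
    simp only [hsub]
    exact tendsto_sub_nhds_zero_iff.mpr hT
  · intro hv
    have h1 := tendsto_of_mem_stable T hv
    simp only [hsub] at h1
    exact tendsto_sub_nhds_zero_iff.mp h1
end

section
/- If a Lindblad system admits two linearly independent steady states ρ_ss⁰ and ρ_ss¹, then for any steady state ρ_ss, the attraction domain DoA[ρ_ss] is contained in a proper affine subspace of the affine space D₁ of Hermitian trace-one matrices (namely ρ_ss + E_−, whose direction does not contain ρ_ss¹ − ρ_ss⁰), and hence has measure zero under the measure M₀ obtained by pushing forward Lebesgue measure through Gell-Mann coordinates. -/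
open Matrix MeasureTheory Filter
open scoped ComplexOrder

attribute [local instance] Matrix.frobeniusNormedAddCommGroup Matrix.frobeniusNormedSpace

variable {N : ℕ}

noncomputable local instance : MeasurableSpace (Matrix (Fin N) (Fin N) ℂ) := borel _
local instance : BorelSpace (Matrix (Fin N) (Fin N) ℂ) := ⟨rfl⟩

/-- The Lindblad generator as a linear map on `N × N` complex matrices. -/
noncomputable def lindbladLin {M : ℕ} (H0 : Matrix (Fin N) (Fin N) ℂ)
    (L : Fin M → Matrix (Fin N) (Fin N) ℂ) :
    Matrix (Fin N) (Fin N) ℂ →ₗ[ℂ] Matrix (Fin N) (Fin N) ℂ :=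
  (-Complex.I) • (LinearMap.mulLeft ℂ H0 - LinearMap.mulRight ℂ H0) +
    ∑ k : Fin M, ((LinearMap.mulRight ℂ (L k)ᴴ).comp (LinearMap.mulLeft ℂ (L k))
      - (1 / 2 : ℂ) • LinearMap.mulLeft ℂ ((L k)ᴴ * L k)
      - (1 / 2 : ℂ) • LinearMap.mulRight ℂ ((L k)ᴴ * L k))

/-- A density operator: positive semidefinite with trace one. -/
def IsDensityOp (ρ : Matrix (Fin N) (Fin N) ℂ) : Prop :=
  ρ.PosSemidef ∧ ρ.trace = 1

/-- The Gell-Mann coordinate parametrization: `a ↦ (1/N)·I + Σ_k (a_k/√2)·B_k`. -/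
noncomputable def gellMannParam (B : Fin (N ^ 2 - 1) → Matrix (Fin N) (Fin N) ℂ)
    (a : Fin (N ^ 2 - 1) → ℝ) : Matrix (Fin N) (Fin N) ℂ :=
  ((N : ℂ)⁻¹) • 1 + ∑ k, ((a k / Real.sqrt 2 : ℝ) : ℂ) • B k

/-- Real smul preserves hermiticity. -/
lemma isHermitian_real_smul (r : ℝ) (A : Matrix (Fin N) (Fin N) ℂ) (hA : A.IsHermitian) :
    (r • A).IsHermitian := by
  rw [← Complex.coe_smul]
  unfold Matrix.IsHermitian
  rw [Matrix.conjTranspose_smul, Complex.star_def, Complex.conj_ofReal, hA]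

/-- The real subspace of hermitian traceless matrices. -/
noncomputable def hermTraceless (N : ℕ) : Submodule ℝ (Matrix (Fin N) (Fin N) ℂ) where
  carrier := {A | A.IsHermitian ∧ A.trace = 0}
  add_mem' := fun ha hb => ⟨ha.1.add hb.1, by rw [Matrix.trace_add, ha.2, hb.2, add_zero]⟩
  zero_mem' := ⟨Matrix.isHermitian_zero, by simp⟩
  smul_mem' := fun c A hA => ⟨isHermitian_real_smul c A hA.1,
    by rw [Matrix.trace_smul, hA.2, smul_zero]⟩

/-- If a Lindblad system admits two linearly independent steady states, then the attraction
domain `(ρss + E₋) ∩ D(H)` of any steady state `ρss` is contained in a proper affine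
subspace of the Hermitian trace-one matrices (whose direction misses `ρss¹ − ρss⁰`), and
hence is null for the pushforward `M₀` of Lebesgue measure under Gell-Mann coordinates. -/
theorem doa_measure_zero {M : ℕ} (hN : 1 ≤ N)
    (H0 : Matrix (Fin N) (Fin N) ℂ) (hH0 : H0.IsHermitian)
    (L : Fin M → Matrix (Fin N) (Fin N) ℂ)
    (ρss0 ρss1 : Matrix (Fin N) (Fin N) ℂ)
    (h0 : IsDensityOp ρss0 ∧ lindbladLin H0 L ρss0 = 0)
    (h1 : IsDensityOp ρss1 ∧ lindbladLin H0 L ρss1 = 0)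
    (hindep : LinearIndependent ℂ ![ρss0, ρss1])
    (ρss : Matrix (Fin N) (Fin N) ℂ)
    (hss : IsDensityOp ρss ∧ lindbladLin H0 L ρss = 0)
    (Eneg : Submodule ℂ (Matrix (Fin N) (Fin N) ℂ))
    (hE : Eneg = ⨆ μ ∈ {μ : ℂ | μ.re < 0},
      Module.End.maxGenEigenspace (lindbladLin H0 L) μ)
    (B : Fin (N ^ 2 - 1) → Matrix (Fin N) (Fin N) ℂ)
    (hHerm : ∀ k, (B k).IsHermitian) (htraceless : ∀ k, (B k).trace = 0)
    (horth : ∀ i j, (B i * B j).trace = if i = j then 2 else 0)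
    (hspan : ∀ A : Matrix (Fin N) (Fin N) ℂ, A.IsHermitian → A.trace = 0 →
      A ∈ Submodule.span ℝ (Set.range B))
    (M₀ : Measure (Matrix (Fin N) (Fin N) ℂ))
    (hM₀ : M₀ = (volume : Measure (Fin (N ^ 2 - 1) → ℝ)).map (gellMannParam B)) :
    (∃ W : AffineSubspace ℝ (Matrix (Fin N) (Fin N) ℂ),
      {ρ | IsDensityOp ρ ∧ ρ - ρss ∈ Eneg} ⊆ (W : Set _) ∧
      (W : Set _) ⊆ {A : Matrix (Fin N) (Fin N) ℂ | A.IsHermitian ∧ A.trace = 1} ∧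
      ρss1 - ρss0 ∉ W.direction) ∧
    M₀ {ρ | IsDensityOp ρ ∧ ρ - ρss ∈ Eneg} = 0 := by
  set f := lindbladLin H0 L with hf
  set δ := ρss1 - ρss0 with hδdef
  -- δ is nonzero
  have hδ0 : δ ≠ 0 := by
    rw [hδdef, sub_ne_zero]
    intro h
    have := hindep.injective (show ![ρss0, ρss1] 1 = ![ρss0, ρss1] 0 by simp [h])
    simp at this
  -- δ is in the generalized eigenspace for 0
  have hδker : δ ∈ Module.End.maxGenEigenspace f 0 := by
    rw [Module.End.mem_maxGenEigenspace]
    refine ⟨1, ?_⟩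
    simp only [zero_smul, sub_zero, pow_one]
    rw [hδdef, map_sub, h1.2, h0.2, sub_zero]
  -- δ is not in Eneg
  have hδE : δ ∉ Eneg := by
    intro hδE
    have hdisj : Disjoint (Module.End.maxGenEigenspace f 0) Eneg := by
      rw [hE]
      exact (Module.End.independent_maxGenEigenspace f).disjoint_biSup (by simp)
    exact hδ0 (Submodule.disjoint_def.mp hdisj δ hδker hδE)
  -- δ is hermitian and traceless
  have hδH : δ.IsHermitian := h1.1.1.isHermitian.sub h0.1.1.isHermitian
  have hδtr : δ.trace = 0 := by
    rw [hδdef, Matrix.trace_sub, h1.1.2, h0.1.2, sub_self]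
  -- the affine subspace
  set V : Submodule ℝ (Matrix (Fin N) (Fin N) ℂ) :=
    (Eneg.restrictScalars ℝ) ⊓ hermTraceless N with hV
  set W : AffineSubspace ℝ (Matrix (Fin N) (Fin N) ℂ) := AffineSubspace.mk' ρss V with hW
  have hdir : W.direction = V := AffineSubspace.direction_mk' ρss V
  have hδW : δ ∉ W.direction := by
    rw [hdir]
    intro h
    exact hδE ((Submodule.restrictScalars_mem ℝ Eneg δ).mp (Submodule.mem_inf.mp h).1)
  -- DoA ⊆ W
  have hsub : {ρ | IsDensityOp ρ ∧ ρ - ρss ∈ Eneg} ⊆ (W : Set _) := by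
    rintro ρ ⟨⟨hpos, htr⟩, hmem⟩
    rw [hW, SetLike.mem_coe, AffineSubspace.mem_mk', vsub_eq_sub]
    refine Submodule.mem_inf.mpr ⟨(Submodule.restrictScalars_mem ℝ Eneg _).mpr hmem, ?_, ?_⟩
    · exact hpos.isHermitian.sub hss.1.1.isHermitian
    · rw [Matrix.trace_sub, htr, hss.1.2, sub_self]
  -- W ⊆ hermitian trace-one
  have hsub2 : (W : Set _) ⊆ {A : Matrix (Fin N) (Fin N) ℂ | A.IsHermitian ∧ A.trace = 1} := by
    intro A hA
    rw [hW, SetLike.mem_coe, AffineSubspace.mem_mk', vsub_eq_sub] at hA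
    obtain ⟨-, hH, htr⟩ := Submodule.mem_inf.mp hA
    have hAe : A = (A - ρss) + ρss := by abel
    constructor
    · rw [hAe]; exact hH.add hss.1.1.isHermitian
    · rw [hAe, Matrix.trace_add, htr, hss.1.2, zero_add]
  refine ⟨⟨W, hsub, hsub2, hδW⟩, ?_⟩
  -- the measure-zero part
  -- the linear part of the Gell-Mann parametrization
  set l : (Fin (N ^ 2 - 1) → ℝ) →ₗ[ℝ] Matrix (Fin N) (Fin N) ℂ :=
    ∑ k, LinearMap.smulRight ((Real.sqrt 2)⁻¹ • LinearMap.proj k) (B k) with hl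
  have hlapp : ∀ a : Fin (N ^ 2 - 1) → ℝ,
      l a = ∑ k, ((a k / Real.sqrt 2 : ℝ) : ℂ) • B k := by
    intro a
    rw [hl, LinearMap.sum_apply]
    refine Finset.sum_congr rfl fun k _ => ?_
    rw [LinearMap.smulRight_apply, LinearMap.smul_apply, LinearMap.proj_apply,
      Complex.coe_smul, smul_eq_mul, div_eq_inv_mul]
  have hg0 : gellMannParam B 0 = ((N : ℂ)⁻¹) • 1 := by
    simp [gellMannParam]
  have hgl : ∀ a, gellMannParam B a = l a + gellMannParam B 0 := by
    intro a
    rw [hlapp, hg0, gellMannParam, add_comm]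
  set gaff : (Fin (N ^ 2 - 1) → ℝ) →ᵃ[ℝ] Matrix (Fin N) (Fin N) ℂ :=
    AffineMap.mk' (gellMannParam B) l 0 (fun p => by
      simpa [vsub_eq_sub, vadd_eq_add] using hgl p) with hgaff
  have hgaffc : ⇑gaff = gellMannParam B := AffineMap.coe_mk' _ _ _ _
  -- the preimage affine subspace is proper
  have hP : W.comap gaff ≠ ⊤ := by
    intro htop
    have hmem : ∀ a, gellMannParam B a ∈ W := by
      intro a
      have : a ∈ W.comap gaff := htop ▸ AffineSubspace.mem_top ℝ _ a
      rw [AffineSubspace.mem_comap, hgaffc] at this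
      exact this
    obtain ⟨c, hc⟩ := (Submodule.mem_span_range_iff_exists_fun ℝ).mp (hspan δ hδH hδtr)
    set a₀ : Fin (N ^ 2 - 1) → ℝ := fun k => Real.sqrt 2 * c k with ha₀
    have hs2 : Real.sqrt 2 ≠ 0 := by positivity
    have hdiff : gellMannParam B a₀ - gellMannParam B 0 = δ := by
      rw [hgl a₀, add_sub_cancel_right, hlapp, ← hc]
      refine Finset.sum_congr rfl fun k _ => ?_
      simp only [ha₀]
      rw [mul_div_cancel_left₀ _ hs2, Complex.coe_smul]
    have : δ ∈ W.direction := by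
      rw [← hdiff]
      exact AffineSubspace.vsub_mem_direction (hmem a₀) (hmem 0)
    exact hδW this
  -- measurability
  have hWclosed : IsClosed (W : Set (Matrix (Fin N) (Fin N) ℂ)) :=
    W.closed_of_finiteDimensional
  have hgm : Measurable (gellMannParam B) := by
    rw [← hgaffc]
    exact gaff.continuous_of_finiteDimensional.borel_measurable.mono
      (BorelSpace.measurable_eq (α := Fin (N ^ 2 - 1) → ℝ)).ge le_rfl
  have hWnull : M₀ (W : Set _) = 0 := by
    rw [hM₀, Measure.map_apply hgm hWclosed.measurableSet]
    have hpre : gellMannParam B ⁻¹' (W : Set _) = (W.comap gaff : Set _) := by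
      rw [AffineSubspace.coe_comap, hgaffc]
    rw [hpre]
    exact Measure.addHaar_affineSubspace volume _ hP
  exact measure_mono_null hsub hWnull
end
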